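/- Let d ≥ 1, σ ≥ 1, δ ∈ (0,1/2] and θ₂ > 0. There exists a constant C₀ > 0, depending only on d, σ, δ and θ₂, such that for all t ≥ 0 and all k, ℓ ∈ ℤ^d ∖ {0} with k ≠ ℓ: sup_{0 ≤ s ≤ t} e^{−(θ₂/4)|k|(t−s)/⟨t⟩^{δ}} · min{⟨ℓ,ℓs⟩, ⟨k−ℓ, kt−ℓs⟩}^{−σ} ≤ C₀ ⟨t⟩^{−2δ}. -/

import Mathlib

open MeasureTheory
open scoped ENNReal

noncomputable section

/-- `ℝ^d` with the Euclidean norm. -/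
abbrev Ed (d : ℕ) := EuclideanSpace ℝ (Fin d)

/-- Embedding of `ℤ^d` into `ℝ^d`. -/
def toE {d : ℕ} (k : Fin d → ℤ) : Ed d := WithLp.toLp 2 (fun i => (k i : ℝ))

/-- Japanese bracket of a scalar: `⟨u⟩ = (1+u²)^{1/2}`. -/
def jap (u : ℝ) : ℝ := Real.sqrt (1 + u ^ 2)

/-- Japanese bracket of a vector: `⟨η⟩ = (1+|η|²)^{1/2}`. -/
def japV {d : ℕ} (η : Ed d) : ℝ := Real.sqrt (1 + ‖η‖ ^ 2)

/-- Joint bracket `⟨k,η⟩ = (1+|k|²+|η|²)^{1/2}`. -/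
def japKV {d : ℕ} (k : Fin d → ℤ) (η : Ed d) : ℝ := Real.sqrt (1 + ‖toE k‖ ^ 2 + ‖η‖ ^ 2)

/-- The analytic weight `A_{k,η}(z) = e^{z⟨k,η⟩} ⟨η⟩^σ`. -/
def wA (d : ℕ) (σ z : ℝ) (k : Fin d → ℤ) (η : Ed d) : ℝ :=
  Real.exp (z * japKV k η) * japV η ^ σ

lemma one_le_norm_toE {d : ℕ} {k : Fin d → ℤ} (hk : k ≠ 0) : 1 ≤ ‖toE k‖ := by
  obtain ⟨i, hi⟩ := Function.ne_iff.mp hk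
  have h1 : (1:ℝ) ≤ |(k i : ℝ)| := by exact_mod_cast Int.one_le_abs hi
  have h2 : |(k i : ℝ)| ≤ ‖toE k‖ := by
    rw [EuclideanSpace.norm_eq]
    have hterm : |(k i:ℝ)|^2 ≤ ∑ j, ‖toE k j‖^2 := by
      have : ‖toE k i‖^2 ≤ ∑ j, ‖toE k j‖^2 :=
        Finset.single_le_sum (f := fun j => ‖toE k j‖^2) (fun j _ => sq_nonneg _)
          (Finset.mem_univ i)
      simpa [toE] using this
    have := Real.sqrt_le_sqrt hterm
    simpa [Real.sqrt_sq_eq_abs] using this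
  linarith

lemma le_japKV_snd {d : ℕ} (k : Fin d → ℤ) (η : Ed d) : ‖η‖ ≤ japKV k η := by
  have h := Real.sq_sqrt (by positivity : (0:ℝ) ≤ 1 + ‖toE k‖ ^ 2 + ‖η‖ ^ 2)
  have h0 := Real.sqrt_nonneg (1 + ‖toE k‖ ^ 2 + ‖η‖ ^ 2)
  have hn : (0:ℝ) ≤ ‖η‖ := norm_nonneg _
  unfold japKV
  nlinarith [sq_nonneg ‖toE k‖, sq_nonneg (Real.sqrt (1 + ‖toE k‖ ^ 2 + ‖η‖ ^ 2) - ‖η‖)]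

lemma one_le_japKV {d : ℕ} (k : Fin d → ℤ) (η : Ed d) : 1 ≤ japKV k η := by
  have h1 := Real.sqrt_le_sqrt
    (show (1:ℝ) ≤ 1 + ‖toE k‖^2+‖η‖^2 by nlinarith [sq_nonneg ‖toE k‖, sq_nonneg ‖η‖])
  simpa [japKV] using h1

lemma toE_sub {d : ℕ} (k ℓ : Fin d → ℤ) : toE (k - ℓ) = toE k - toE ℓ := by
  ext i; simp [toE, Pi.sub_apply]

lemma one_le_jap (t : ℝ) : 1 ≤ jap t := by
  have h1 := Real.sqrt_le_sqrt (show (1:ℝ) ≤ 1 + t^2 by nlinarith [sq_nonneg t])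
  simpa [jap] using h1

lemma jap_le_one_add {t : ℝ} (ht : 0 ≤ t) : jap t ≤ 1 + t := by
  have h1 : jap t ≤ Real.sqrt ((1+t)^2) := Real.sqrt_le_sqrt (by nlinarith)
  rwa [Real.sqrt_sq (by linarith)] at h1

set_option maxHeartbeats 4000000 in
/-- for `k ≠ ℓ` both nonzero, the pointwise bound
`sup_{0≤s≤t} e^{-(θ₂/4)|k|(t-s)/⟨t⟩^δ} min{⟨ℓ,ℓs⟩,⟨k-ℓ,kt-ℓs⟩}^{-σ} ≤ C₀⟨t⟩^{-2δ}`. -/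
theorem pointwise_echo_gain (d : ℕ) (hd : 1 ≤ d) (σ δ θ₂ : ℝ)
    (hσ : 1 ≤ σ) (hδ0 : 0 < δ) (hδ1 : δ ≤ 1 / 2) (hθ : 0 < θ₂) :
    ∃ C₀ > (0:ℝ), ∀ t : ℝ, 0 ≤ t →
      ∀ k ℓ : Fin d → ℤ, k ≠ 0 → ℓ ≠ 0 → k ≠ ℓ →
      ∀ s : ℝ, 0 ≤ s → s ≤ t →
        Real.exp (-(θ₂ / 4) * ‖toE k‖ * (t - s) / jap t ^ δ) *
          min (japKV ℓ (s • toE ℓ)) (japKV (k - ℓ) (t • toE k - s • toE ℓ)) ^ (-σ) ≤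
        C₀ * jap t ^ (-(2 * δ)) := by
  refine ⟨9 + 4096 / θ₂ ^ 2, by positivity, ?_⟩
  intro t ht k ℓ hk hℓ hkl s hs hst
  set C₀ : ℝ := 9 + 4096 / θ₂ ^ 2 with hC₀
  have hC₀9 : (9:ℝ) ≤ C₀ := by
    have : (0:ℝ) ≤ 4096 / θ₂ ^ 2 := by positivity
    rw [hC₀]; linarith
  have hC₀pos : (0:ℝ) < C₀ := by positivity
  have hkn : 1 ≤ ‖toE k‖ := one_le_norm_toE hk
  have hℓn : 1 ≤ ‖toE ℓ‖ := one_le_norm_toE hℓ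
  have hkln : 1 ≤ ‖toE (k - ℓ)‖ := one_le_norm_toE (sub_ne_zero.mpr hkl)
  set A : ℝ := japKV ℓ (s • toE ℓ) with hAdef
  set B : ℝ := japKV (k - ℓ) (t • toE k - s • toE ℓ) with hBdef
  have hA1 : 1 ≤ A := one_le_japKV _ _
  have hB1 : 1 ≤ B := one_le_japKV _ _
  set M : ℝ := min A B with hMdef
  have hM1 : 1 ≤ M := le_min hA1 hB1
  have hAs : s ≤ A := by
    have h1 : ‖s • toE ℓ‖ ≤ A := le_japKV_snd _ _
    have h2 : ‖s • toE ℓ‖ = s * ‖toE ℓ‖ := by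
      rw [norm_smul, Real.norm_eq_abs, abs_of_nonneg hs]
    nlinarith
  -- jap facts
  have hj1 : 1 ≤ jap t := one_le_jap t
  have hjle : jap t ≤ 1 + t := jap_le_one_add ht
  have hjpd1 : 1 ≤ jap t ^ δ := Real.one_le_rpow hj1 hδ0.le
  have hjpdpos : 0 < jap t ^ δ := by linarith
  have hjpdsq : (jap t ^ δ) ^ 2 ≤ 1 + t := by
    have e1 : jap t ^ δ ≤ jap t ^ ((1:ℝ)/2) :=
      Real.rpow_le_rpow_of_exponent_le hj1 hδ1
    have e2 : (jap t ^ ((1:ℝ)/2)) ^ 2 = jap t := by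
      rw [← Real.rpow_natCast (jap t ^ ((1:ℝ)/2)) 2, ← Real.rpow_mul (by linarith)]
      norm_num
    calc (jap t ^ δ)^2 ≤ (jap t ^ ((1:ℝ)/2))^2 := by
          apply pow_le_pow_left₀ (by positivity) e1
      _ = jap t := e2
      _ ≤ 1 + t := hjle
  have hfin : (1+t)⁻¹ ≤ jap t ^ (-(2*δ)) := by
    have e3 : jap t ^ (2*δ) ≤ 1 + t := by
      calc jap t ^ (2*δ) ≤ jap t ^ (1:ℝ) :=
            Real.rpow_le_rpow_of_exponent_le hj1 (by linarith)
        _ = jap t := Real.rpow_one _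
        _ ≤ 1 + t := hjle
    rw [Real.rpow_neg (by linarith : (0:ℝ) ≤ jap t)]
    exact inv_anti₀ (by positivity) e3
  -- basic bounds on the factors
  have hEarg : -(θ₂ / 4) * ‖toE k‖ * (t - s) / jap t ^ δ ≤ 0 := by
    apply div_nonpos_of_nonpos_of_nonneg _ (by positivity)
    nlinarith [mul_nonneg (mul_nonneg (by linarith : (0:ℝ) ≤ θ₂/4)
      (by linarith : (0:ℝ) ≤ ‖toE k‖)) (by linarith : (0:ℝ) ≤ t - s)]
  have hE1 : Real.exp (-(θ₂ / 4) * ‖toE k‖ * (t - s) / jap t ^ δ) ≤ 1 :=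
    Real.exp_le_one_iff.mpr hEarg
  have hMσ1 : M ^ (-σ) ≤ 1 :=
    Real.rpow_le_one_of_one_le_of_nonpos hM1 (by linarith)
  have hMσ0 : 0 ≤ M ^ (-σ) := Real.rpow_nonneg (by linarith) _
  -- reduce to a bound with (1+t)⁻¹
  suffices h : Real.exp (-(θ₂ / 4) * ‖toE k‖ * (t - s) / jap t ^ δ) * M ^ (-σ)
      ≤ C₀ * (1+t)⁻¹ by
    calc Real.exp (-(θ₂ / 4) * ‖toE k‖ * (t - s) / jap t ^ δ) * M ^ (-σ)
        ≤ C₀ * (1+t)⁻¹ := h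
      _ ≤ C₀ * jap t ^ (-(2*δ)) := mul_le_mul_of_nonneg_left hfin hC₀pos.le
  by_cases ht8 : t ≤ 8
  · -- small time
    have h9 : (1:ℝ) ≤ C₀ * (1+t)⁻¹ := by
      have hi : (9:ℝ)⁻¹ ≤ (1+t)⁻¹ := by
        apply inv_anti₀ (by linarith) (by linarith)
      calc (1:ℝ) = 9 * (9:ℝ)⁻¹ := by norm_num
        _ ≤ C₀ * (1+t)⁻¹ := by
            apply mul_le_mul hC₀9 hi (by norm_num) hC₀pos.le
    calc Real.exp (-(θ₂ / 4) * ‖toE k‖ * (t - s) / jap t ^ δ) * M ^ (-σ)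
        ≤ 1 * 1 := mul_le_mul hE1 hMσ1 hMσ0 zero_le_one
      _ = 1 := by norm_num
      _ ≤ C₀ * (1+t)⁻¹ := h9
  · push_neg at ht8
    by_cases hMt : t/2 ≤ M
    · -- min is large
      have h1 : M ^ (-σ) ≤ M⁻¹ := by
        have h := Real.rpow_le_rpow_of_exponent_le hM1 (show -σ ≤ -1 by linarith)
        rwa [Real.rpow_neg_one] at h
      have h2 : M⁻¹ ≤ (t/2)⁻¹ := inv_anti₀ (by linarith) hMt
      have h3 : (t/2)⁻¹ ≤ 4 * (1+t)⁻¹ := by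
        rw [← one_div, show (4:ℝ) * (1+t)⁻¹ = 4/(1+t) by rw [div_eq_mul_inv]]
        rw [div_le_div_iff₀ (by linarith) (by linarith)]
        nlinarith
      calc Real.exp (-(θ₂ / 4) * ‖toE k‖ * (t - s) / jap t ^ δ) * M ^ (-σ)
          ≤ 1 * M ^ (-σ) := mul_le_mul_of_nonneg_right hE1 hMσ0
        _ = M ^ (-σ) := one_mul _
        _ ≤ 4 * (1+t)⁻¹ := le_trans h1 (le_trans h2 h3)
        _ ≤ C₀ * (1+t)⁻¹ := by
            apply mul_le_mul_of_nonneg_right (by linarith) (by positivity)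
    · -- min is small : exponential gain
      push_neg at hMt
      have hy : t/4 ≤ ‖toE k‖ * (t - s) := by
        rcases le_total A B with hAB | hAB
        · have hMA : M = A := min_eq_left hAB
          have hs2 : s < t/2 := by
            have : A < t/2 := hMA ▸ hMt
            linarith
          nlinarith [mul_nonneg (by linarith : (0:ℝ) ≤ ‖toE k‖ - 1)
            (by linarith : (0:ℝ) ≤ t - s)]
        · have hMB : M = B := min_eq_right hAB
          have hB2 : B < t/2 := by rw [← hMB]; exact hMt
          have hb2 : ‖t • toE k - s • toE ℓ‖ ≤ B := le_japKV_snd _ _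
          have e : s • (toE k - toE ℓ) = (t • toE k - s • toE ℓ) - (t - s) • toE k := by
            rw [smul_sub, sub_smul]; abel
          have h1 : ‖s • (toE k - toE ℓ)‖ ≤ ‖t • toE k - s • toE ℓ‖ + ‖(t-s) • toE k‖ := by
            rw [e]; exact norm_sub_le _ _
          have h2 : s ≤ ‖s • (toE k - toE ℓ)‖ := by
            rw [← toE_sub, norm_smul, Real.norm_eq_abs, abs_of_nonneg hs]
            nlinarith
          have h3 : ‖(t-s) • toE k‖ = (t-s) * ‖toE k‖ := by
            rw [norm_smul, Real.norm_eq_abs, abs_of_nonneg (by linarith)]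
          have hkey : s ≤ B + (t-s) * ‖toE k‖ := by
            rw [h3] at h1; linarith
          nlinarith [mul_nonneg (by linarith : (0:ℝ) ≤ ‖toE k‖ - 1)
            (by linarith : (0:ℝ) ≤ t - s)]
      -- the exponential estimate
      set x : ℝ := θ₂/4 * (‖toE k‖ * (t - s)) / jap t ^ δ with hxdef
      have hxeq : -(θ₂ / 4) * ‖toE k‖ * (t - s) / jap t ^ δ = -x := by
        rw [hxdef]; ring
      have hxlb : θ₂ * t ≤ 16 * (jap t ^ δ) * x := by
        rw [hxdef]
        have e16 : 16 * (jap t ^ δ) * (θ₂/4 * (‖toE k‖ * (t - s)) / jap t ^ δ)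
            = 4 * θ₂ * (‖toE k‖ * (t - s)) := by
          field_simp; ring
        rw [e16]
        nlinarith [mul_le_mul_of_nonneg_left hy hθ.le]
      have hxpos : 0 < x := by
        have : 0 < θ₂ * t := by positivity
        nlinarith
      have hexple : Real.exp (-x) ≤ 4 / x^2 := by
        have h1 : x/2 + 1 ≤ Real.exp (x/2) := by
          have := Real.add_one_le_exp (x/2); linarith
        have h2 : (x/2+1)^2 ≤ Real.exp (x/2) ^ 2 := by
          apply pow_le_pow_left₀ (by positivity) h1
        have h3 : Real.exp (x/2) ^ 2 = Real.exp x := by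
          rw [sq, ← Real.exp_add]; ring_nf
        have hx2 : x^2/4 ≤ Real.exp x := by nlinarith
        rw [Real.exp_neg, le_div_iff₀ (by positivity : (0:ℝ) < x^2)]
        rw [inv_mul_le_iff₀ (Real.exp_pos x)]
        nlinarith
      -- combine
      have hF : 4 / x^2 ≤ (4096 / θ₂^2) * (1+t)⁻¹ := by
        have e : (4096/θ₂^2) * (1+t)⁻¹ = 4096 / (θ₂^2 * (1+t)) := by
          field_simp
        rw [e, div_le_div_iff₀ (by positivity) (by positivity)]
        -- 4 * (θ₂² (1+t)) ≤ 4096 x²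
        have hsq : θ₂^2 * t^2 ≤ 256 * (1+t) * x^2 := by
          have h1 : (θ₂*t)^2 ≤ (16*(jap t ^ δ)*x)^2 := by
            apply pow_le_pow_left₀ (by positivity) hxlb
          have h3 := mul_le_mul_of_nonneg_right hjpdsq
            (by positivity : (0:ℝ) ≤ 256*x^2)
          nlinarith [h1, h3]
        have hpos1t : (0:ℝ) < 1 + t := by linarith
        have hquad : (0:ℝ) ≤ 4*t^2 - (1+t)^2 := by
          nlinarith [mul_pos (by linarith : (0:ℝ) < t-1) (by linarith : (0:ℝ) < 3*t+1)]
        nlinarith [hsq, mul_nonneg (sq_nonneg θ₂) hquad, sq_nonneg x, hpos1t]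
      calc Real.exp (-(θ₂ / 4) * ‖toE k‖ * (t - s) / jap t ^ δ) * M ^ (-σ)
          ≤ Real.exp (-(θ₂ / 4) * ‖toE k‖ * (t - s) / jap t ^ δ) * 1 :=
            mul_le_mul_of_nonneg_left hMσ1 (Real.exp_nonneg _)
        _ = Real.exp (-x) := by rw [mul_one, hxeq]
        _ ≤ 4 / x^2 := hexple
        _ ≤ (4096/θ₂^2) * (1+t)⁻¹ := hF
        _ ≤ C₀ * (1+t)⁻¹ := by
            apply mul_le_mul_of_nonneg_right _ (by positivity)
            rw [hC₀]; linarith
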